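/- arXiv:2010.08695 — 2 statements merged into one kernel-verified Lean document; each statement's English description precedes it below -/
import Mathlib

section
/- Let S ⊆ U and u ∈ U \ S. Then the number of butterflies containing u in the subgraph of G induced on (U \ S) ∪ V equals ⋈_u − Σ_{u'∈S} ⋈_{u,u'}, where ⋈_u is the number of butterflies containing u in G and ⋈_{u,u'} is the number of butterflies of G containing both u and u'. In particular, this quantity depends only on the set S and not on any order in which vertices of S are removed. -/
open Finset

variable {α β : Type*} [Fintype α] [Fintype β] [DecidableEq α] [DecidableEq β]

/-- Neighborhood (in the `V` side) of a `U`-side vertex, for bipartite adjacency `A`. -/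
def nbrU (A : α → β → Prop) [∀ u v, Decidable (A u v)] (u : α) : Finset β :=
  univ.filter (fun v => A u v)

/-- Neighborhood (in the `U` side) of a `V`-side vertex. -/
def nbrV (A : α → β → Prop) [∀ u v, Decidable (A u v)] (v : β) : Finset α :=
  univ.filter (fun u => A u v)

/-- A butterfly (2,2-biclique): a pair of a 2-subset of `U` and a 2-subset of `V`
with all four cross edges present. -/
def butterflies (A : α → β → Prop) [∀ u v, Decidable (A u v)] : Finset (Finset α × Finset β) :=
  univ.filter (fun p => p.1.card = 2 ∧ p.2.card = 2 ∧ ∀ u ∈ p.1, ∀ v ∈ p.2, A u v)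

/-- Number of butterflies containing the `U`-vertex `u`. -/
def btfCount (A : α → β → Prop) [∀ u v, Decidable (A u v)] (u : α) : ℕ :=
  ((butterflies A).filter (fun p => u ∈ p.1)).card

/-- Number of butterflies containing both `U`-vertices `u` and `u'`. -/
def btfCountPair (A : α → β → Prop) [∀ u v, Decidable (A u v)] (u u' : α) : ℕ :=
  ((butterflies A).filter (fun p => u ∈ p.1 ∧ u' ∈ p.1)).card

/-- Butterflies of the subgraph induced on `S ∪ V`. -/
def butterfliesIn (A : α → β → Prop) [∀ u v, Decidable (A u v)] (S : Finset α) :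
    Finset (Finset α × Finset β) :=
  (butterflies A).filter (fun p => p.1 ⊆ S)

/-- Number of butterflies containing `u` in the subgraph induced on `S ∪ V`. -/
def btfCountIn (A : α → β → Prop) [∀ u v, Decidable (A u v)] (S : Finset α) (u : α) : ℕ :=
  ((butterfliesIn A S).filter (fun p => u ∈ p.1)).card

/-- Wedges with both endpoints in `U`: a 2-subset of `U` together with a common neighbor. -/
def wedges (A : α → β → Prop) [∀ u v, Decidable (A u v)] : Finset (Finset α × β) :=
  univ.filter (fun p => p.1.card = 2 ∧ ∀ u ∈ p.1, A u p.2)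

/-- Two `U`-vertices are connected by a series of butterflies within the subgraph induced
on `S ∪ V`. -/
def btfConnected (A : α → β → Prop) [∀ u v, Decidable (A u v)] (S : Finset α) : α → α → Prop :=
  Relation.ReflTransGen (fun a b => ∃ p ∈ butterfliesIn A S, a ∈ p.1 ∧ b ∈ p.1)

/-- The two defining conditions of a `k`-tip (before maximality): every vertex of `S` has at
least `k` butterflies in the induced subgraph, and `S` is butterfly-connected. -/
def tipCond (A : α → β → Prop) [∀ u v, Decidable (A u v)] (k : ℕ) (S : Finset α) : Prop :=
  (∀ u ∈ S, k ≤ btfCountIn A S u) ∧ ∀ u1 ∈ S, ∀ u2 ∈ S, btfConnected A S u1 u2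

/-- A `k`-tip: a maximal set satisfying the `k`-tip conditions. -/
def kTip (A : α → β → Prop) [∀ u v, Decidable (A u v)] (k : ℕ) (S : Finset α) : Prop :=
  tipCond A k S ∧ ∀ S', S ⊆ S' → tipCond A k S' → S' = S

/-- The tip number of `u`: the largest `k` such that `u` lies in some `k`-tip. -/
noncomputable def tipNumber (A : α → β → Prop) [∀ u v, Decidable (A u v)] (u : α) : ℕ :=
  sSup {k : ℕ | ∃ S, kTip A k S ∧ u ∈ S}

/-- for `S ⊆ U` and `u ∉ S`, the butterfly count of `u` in the subgraph
induced on `(U \\ S) ∪ V` equals `⋈_u − Σ_{u'∈S} ⋈_{u,u'}`; in particular it depends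
only on the set `S`, not on any removal order. -/
theorem stmt9 (A : α → β → Prop) [∀ u v, Decidable (A u v)]
    (S : Finset α) (u : α) (hu : u ∉ S) :
    btfCountIn A (univ \ S) u = btfCount A u - ∑ u' ∈ S, btfCountPair A u u' := by
  classical
  set T := (butterflies A).filter (fun p => u ∈ p.1) with hT
  have h2 : btfCountIn A (univ \ S) u = (T.filter (fun p => p.1 ⊆ univ \ S)).card := by
    unfold btfCountIn butterfliesIn
    rw [hT, filter_filter, filter_filter]
    congr 1
    ext p
    simp [and_comm]
  have h3 : ∀ u', btfCountPair A u u' = (T.filter (fun p => u' ∈ p.1)).card := by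
    intro u'
    unfold btfCountPair
    rw [hT, filter_filter]
  have hdisj : ∀ x ∈ S, ∀ y ∈ S, x ≠ y →
      Disjoint (T.filter (fun p => x ∈ p.1)) (T.filter (fun p => y ∈ p.1)) := by
    intro x hx y hy hxy
    rw [Finset.disjoint_left]
    intro p hp hq
    rw [mem_filter] at hp hq
    obtain ⟨hpT, hxp⟩ := hp
    obtain ⟨-, hyp⟩ := hq
    rw [hT, mem_filter] at hpT
    obtain ⟨hpb, hup⟩ := hpT
    have hcard : p.1.card = 2 := by
      simp only [butterflies, mem_filter] at hpb
      exact hpb.2.1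
    have hux : u ≠ x := fun h => hu (h ▸ hx)
    have huy : u ≠ y := fun h => hu (h ▸ hy)
    have hsub : ({u, x, y} : Finset α) ⊆ p.1 := by
      intro z hz
      simp only [mem_insert, mem_singleton] at hz
      rcases hz with rfl | rfl | rfl <;> assumption
    have h3c : ({u, x, y} : Finset α).card = 3 := by
      rw [card_insert_of_notMem (by simp [hux, huy]),
        card_insert_of_notMem (by simp [hxy]), card_singleton]
    have := Finset.card_le_card hsub
    omega
  have hbU : T.filter (fun p => ¬ p.1 ⊆ univ \ S)
      = S.biUnion (fun u' => T.filter (fun p => u' ∈ p.1)) := by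
    ext p
    simp only [mem_filter, mem_biUnion]
    constructor
    · rintro ⟨hpT, hns⟩
      have : ∃ x ∈ p.1, x ∈ S := by
        by_contra h
        push_neg at h
        exact hns fun x hx => mem_sdiff.mpr ⟨mem_univ x, h x hx⟩
      obtain ⟨x, hx1, hx2⟩ := this
      exact ⟨x, hx2, hpT, hx1⟩
    · rintro ⟨x, hxS, hpT, hxp⟩
      exact ⟨hpT, fun h => (mem_sdiff.mp (h hxp)).2 hxS⟩
  have hsplit := Finset.card_filter_add_card_filter_not
    (s := T) (p := fun p => p.1 ⊆ univ \ S)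
  have hsum : ∑ u' ∈ S, btfCountPair A u u'
      = (T.filter (fun p => ¬ p.1 ⊆ univ \ S)).card := by
    rw [hbU, card_biUnion hdisj]
    exact Finset.sum_congr rfl fun u' _ => h3 u'
  have h1 : btfCount A u = T.card := rfl
  rw [h2, h1, hsum]
  omega
end

section
/- Two distinct maximal k-tips of a bipartite graph have disjoint U-vertex sets: if H1 and H2 are k-tips induced on U1 ∪ V and U2 ∪ V respectively and U1 ∩ U2 ≠ ∅, then U1 = U2. -/
open Finset

variable {α β : Type*} [Fintype α] [Fintype β] [DecidableEq α] [DecidableEq β]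

lemma btfCountIn_mono (A : α → β → Prop) [∀ u v, Decidable (A u v)]
    {S S' : Finset α} (h : S ⊆ S') (u : α) :
    btfCountIn A S u ≤ btfCountIn A S' u := by
  apply Finset.card_le_card
  intro p hp
  simp only [btfCountIn, butterfliesIn, Finset.mem_filter] at hp ⊢
  exact ⟨⟨hp.1.1, fun x hx => h (hp.1.2 hx)⟩, hp.2⟩

lemma btfConnected_mono (A : α → β → Prop) [∀ u v, Decidable (A u v)]
    {S S' : Finset α} (h : S ⊆ S') {a b : α} (hc : btfConnected A S a b) :
    btfConnected A S' a b := by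
  refine Relation.ReflTransGen.mono ?_ _ _ hc
  rintro x y ⟨p, hp, hx, hy⟩
  refine ⟨p, ?_, hx, hy⟩
  simp only [butterfliesIn, Finset.mem_filter] at hp ⊢
  exact ⟨hp.1, fun z hz => h (hp.2 hz)⟩

lemma tipCond_union (A : α → β → Prop) [∀ u v, Decidable (A u v)]
    {k : ℕ} {U1 U2 : Finset α} (h1 : tipCond A k U1) (h2 : tipCond A k U2)
    (hmeet : (U1 ∩ U2).Nonempty) : tipCond A k (U1 ∪ U2) := by
  obtain ⟨w, hw⟩ := hmeet
  rw [Finset.mem_inter] at hw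
  constructor
  · intro u hu
    rcases Finset.mem_union.1 hu with h | h
    · exact le_trans (h1.1 u h) (btfCountIn_mono A Finset.subset_union_left u)
    · exact le_trans (h2.1 u h) (btfCountIn_mono A Finset.subset_union_right u)
  · have key : ∀ u ∈ U1 ∪ U2, btfConnected A (U1 ∪ U2) u w := by
      intro u hu
      rcases Finset.mem_union.1 hu with h | h
      · exact btfConnected_mono A Finset.subset_union_left (h1.2 u h w hw.1)
      · exact btfConnected_mono A Finset.subset_union_right (h2.2 u h w hw.2)
    have key' : ∀ u ∈ U1 ∪ U2, btfConnected A (U1 ∪ U2) w u := by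
      intro u hu
      rcases Finset.mem_union.1 hu with h | h
      · exact btfConnected_mono A Finset.subset_union_left (h1.2 w hw.1 u h)
      · exact btfConnected_mono A Finset.subset_union_right (h2.2 w hw.2 u h)
    intro u1 hu1 u2 hu2
    exact (key u1 hu1).trans (key' u2 hu2)

/-- two `k`-tips whose `U`-vertex sets intersect are equal. -/
theorem stmt13 (A : α → β → Prop) [∀ u v, Decidable (A u v)]
    (k : ℕ) (U1 U2 : Finset α) (h1 : kTip A k U1) (h2 : kTip A k U2)
    (hmeet : (U1 ∩ U2).Nonempty) :
    U1 = U2 := by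
  have hc := tipCond_union A h1.1 h2.1 hmeet
  have e1 := h1.2 (U1 ∪ U2) Finset.subset_union_left hc
  have e2 := h2.2 (U1 ∪ U2) Finset.subset_union_right hc
  exact e1.symm.trans e2
end
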